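/- arXiv:1401.1399 — 6 statements merged into one kernel-verified Lean document; each statement's English description precedes it below -/
import Mathlib

section
/- Let G₁ and G₂ be finite simple graphs. For i ∈ {1,2}, let Gᵢ' be obtained from Gᵢ by adding a new vertex uᵢ adjacent to all vertices of Gᵢ. Then G₁ is a minor of G₂ if and only if G₁' is a minor of G₂'. -/
/-- `H` is a minor of `G`: there are pairwise disjoint connected branch sets in `G`,
one for each vertex of `H`, with an edge of `G` between the branch sets of any two
adjacent vertices of `H`. -/
def IsMinorOf {α β : Type*} (H : SimpleGraph α) (G : SimpleGraph β) : Prop :=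
  ∃ B : α → Set β,
    (∀ a, (G.induce (B a)).Connected) ∧
    (Pairwise fun a a' => Disjoint (B a) (B a')) ∧
    ∀ a a', H.Adj a a' → ∃ u ∈ B a, ∃ v ∈ B a', G.Adj u v

/-- The graph obtained from `G` by adding a new vertex adjacent to all other vertices. -/
def coneGraph {α : Type*} (G : SimpleGraph α) : SimpleGraph (Option α) where
  Adj x y :=
    match x, y with
    | some u, some v => G.Adj u v
    | some _, none => True
    | none, some _ => True
    | none, none => False
  symm := by
    constructor
    rintro (_ | u) (_ | v) h
    · exact h
    · trivial
    · trivial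
    · exact G.adj_symm h
  loopless := by
    constructor
    rintro (_ | u) h
    · exact h
    · exact G.irrefl h

lemma coneGraph_adj_some_some {β : Type*} (G : SimpleGraph β) (u v : β) :
    (coneGraph G).Adj (some u) (some v) ↔ G.Adj u v := Iff.rfl

/-- The induced subgraph of the cone on a set of non-apex vertices is isomorphic to
the corresponding induced subgraph of the base graph. -/
noncomputable def coneInduceIso {β : Type*} (G : SimpleGraph β) (S : Set β) :
    G.induce S ≃g (coneGraph G).induce (some '' S) where
  toEquiv := Equiv.Set.image some S (Option.some_injective β)
  map_rel_iff' := Iff.rfl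

lemma cone_induce_connected_iff {β : Type*} (G : SimpleGraph β) (S : Set β) :
    ((coneGraph G).induce (some '' S)).Connected ↔ (G.induce S).Connected :=
  (coneInduceIso G S).connected_iff.symm

lemma image_preimage_some {β : Type*} {S : Set (Option β)} (h : none ∉ S) :
    some '' (some ⁻¹' S) = S := by
  ext x
  cases x with
  | none => simp [h]
  | some v => simp

/-- `G₁` is a minor of `G₂` iff the cone over `G₁` is a minor of the cone over `G₂`. -/
theorem stmt4 {α β : Type*} [Fintype α] [Fintype β]
    (G₁ : SimpleGraph α) (G₂ : SimpleGraph β) :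
    IsMinorOf G₁ G₂ ↔ IsMinorOf (coneGraph G₁) (coneGraph G₂) := by
  classical
  constructor
  · rintro ⟨B, hconn, hdisj, hadj⟩
    refine ⟨fun x => Option.rec {none} (fun a => some '' B a) x, ?_, ?_, ?_⟩
    · rintro (_ | a)
      · rw [SimpleGraph.connected_iff]
        refine ⟨fun x y => ?_, ⟨⟨none, rfl⟩⟩⟩
        have : x = y := Subsingleton.elim x y
        rw [this]
      · exact (cone_induce_connected_iff G₂ (B a)).2 (hconn a)
    · rintro (_ | a) (_ | a') hne
      · exact absurd rfl hne
      · simp only [Set.disjoint_left]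
        rintro x rfl ⟨v, _, h⟩
        simp at h
      · simp only [Set.disjoint_left]
        rintro x ⟨v, _, rfl⟩ h
        simp at h
      · have : a ≠ a' := fun h => hne (by rw [h])
        exact Set.disjoint_image_of_injective (Option.some_injective β) (hdisj this)
    · rintro (_ | a) (_ | a') hadj'
      · exact absurd hadj' (fun h => h)
      · obtain ⟨⟨v, hv⟩⟩ := (hconn a').nonempty
        exact ⟨none, rfl, some v, ⟨v, hv, rfl⟩, trivial⟩
      · obtain ⟨⟨v, hv⟩⟩ := (hconn a).nonempty
        exact ⟨some v, ⟨v, hv, rfl⟩, none, rfl, trivial⟩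
      · obtain ⟨u, hu, v, hv, huv⟩ := hadj a a' hadj'
        exact ⟨some u, ⟨u, hu, rfl⟩, some v, ⟨v, hv, rfl⟩, huv⟩
  · rintro ⟨B, hconn, hdisj, hadj⟩
    by_cases h : ∃ a₀, none ∈ B (some a₀)
    · obtain ⟨a₀, ha₀⟩ := h
      -- the branch set of `none` replaces the branch set of `a₀`
      set C : α → Set β := fun a =>
        some ⁻¹' (if a = a₀ then B none else B (some a)) with hC
      have hnone : ∀ a, a = a₀ →
          none ∉ B none ∧ True := by
        intro a _
        refine ⟨fun hn => ?_, trivial⟩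
        exact Set.disjoint_left.1 (hdisj (show (none : Option α) ≠ some a₀ by simp))
          hn ha₀
      have hnoneB : none ∉ B none := (hnone a₀ rfl).1
      have hnoneBa : ∀ a, a ≠ a₀ → none ∉ B (some a) := by
        intro a ha hn
        exact Set.disjoint_left.1
          (hdisj (show (some a : Option α) ≠ some a₀ by simpa using ha)) hn ha₀
      have hCset : ∀ a, some '' C a = (if a = a₀ then B none else B (some a)) := by
        intro a
        by_cases ha : a = a₀
        · simp only [hC, ha, if_pos rfl]
          exact image_preimage_some hnoneB
        · simp only [hC, if_neg ha]
          exact image_preimage_some (hnoneBa a ha)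
      refine ⟨C, ?_, ?_, ?_⟩
      · intro a
        rw [← cone_induce_connected_iff, hCset a]
        by_cases ha : a = a₀
        · rw [if_pos ha]; exact hconn none
        · rw [if_neg ha]; exact hconn (some a)
      · intro a a' hne
        have : Disjoint (if a = a₀ then B none else B (some a))
            (if a' = a₀ then B none else B (some a')) := by
          by_cases ha : a = a₀ <;> by_cases ha' : a' = a₀
          · exact absurd (ha.trans ha'.symm) hne
          · rw [if_pos ha, if_neg ha']
            exact hdisj (show (none : Option α) ≠ some a' by simp)
          · rw [if_neg ha, if_pos ha']
            exact hdisj (show (some a : Option α) ≠ none by simp)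
          · rw [if_neg ha, if_neg ha']
            exact hdisj (show (some a : Option α) ≠ some a' by simpa using hne)
        exact Disjoint.preimage some this
      · intro a a' haa'
        have hne := haa'.ne
        have key : ∀ x, ∀ b : α, x ∈ B (some b) → b ≠ a₀ → ∃ y, x = some y := by
          intro x b hx hb
          cases x with
          | none => exact absurd hx (hnoneBa b hb)
          | some y => exact ⟨y, rfl⟩
        have keyn : ∀ x, x ∈ B none → ∃ y, x = some y := by
          intro x hx
          cases x with
          | none => exact absurd hx hnoneB
          | some y => exact ⟨y, rfl⟩
        by_cases ha : a = a₀
        · -- a = a₀, so a' ≠ a₀; use the edge from `none` to `some a'` in the cone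
          have ha' : a' ≠ a₀ := fun hh => hne (ha.trans hh.symm)
          obtain ⟨u, hu, v, hv, huv⟩ := hadj none (some a') trivial
          obtain ⟨u', rfl⟩ := keyn u hu
          obtain ⟨v', rfl⟩ := key v a' hv ha'
          refine ⟨u', ?_, v', ?_, huv⟩
          · simp only [hC, Set.mem_preimage, if_pos ha]; exact hu
          · simp only [hC, Set.mem_preimage, if_neg ha']; exact hv
        · by_cases ha' : a' = a₀
          · obtain ⟨u, hu, v, hv, huv⟩ := hadj (some a) none trivial
            obtain ⟨u', rfl⟩ := key u a hu ha
            obtain ⟨v', rfl⟩ := keyn v hv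
            refine ⟨u', ?_, v', ?_, huv⟩
            · simp only [hC, Set.mem_preimage, if_neg ha]; exact hu
            · simp only [hC, Set.mem_preimage, if_pos ha']; exact hv
          · obtain ⟨u, hu, v, hv, huv⟩ := hadj (some a) (some a') haa'
            obtain ⟨u', rfl⟩ := key u a hu ha
            obtain ⟨v', rfl⟩ := key v a' hv ha'
            refine ⟨u', ?_, v', ?_, huv⟩
            · simp only [hC, Set.mem_preimage, if_neg ha]; exact hu
            · simp only [hC, Set.mem_preimage, if_neg ha']; exact hv
    · push_neg at h
      set C : α → Set β := fun a => some ⁻¹' B (some a) with hC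
      have hCset : ∀ a, some '' C a = B (some a) := fun a =>
        image_preimage_some (h a)
      refine ⟨C, ?_, ?_, ?_⟩
      · intro a
        rw [← cone_induce_connected_iff, hCset a]
        exact hconn (some a)
      · intro a a' hne
        exact Disjoint.preimage some
          (hdisj (show (some a : Option α) ≠ some a' by simpa using hne))
      · intro a a' haa'
        obtain ⟨u, hu, v, hv, huv⟩ := hadj (some a) (some a') haa'
        cases u with
        | none => exact absurd hu (h a)
        | some u' =>
          cases v with
          | none => exact absurd hv (h a')
          | some v' => exact ⟨u', hu, v', hv, huv⟩
end

section
/- Let (M, d) be a metric space, let t, n be positive integers, let f be a non-decreasing positive integer-valued function, and define t₀ = t, tᵢ = tᵢ₋₁ + f(tᵢ₋₁) for 1 ≤ i ≤ n−1, and T = t_{n−1}. Let Z, U ⊆ M with |Z| ≤ n, and suppose every u ∈ U has some z ∈ Z with d(u, z) < t. Then there exist Z' ⊆ Z and t' ≤ T such that: (1) every u ∈ U has some z ∈ Z' with d(u, z) < t', and (2) d(z₁, z₂) ≥ f(t') for all distinct z₁, z₂ ∈ Z'. -/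
/-- Greedy sparsification in a metric space: given at most `n` points `Z` covering `U`
by balls of radius `t`, one can find `Z' ⊆ Z` and `t' ≤ T` so that `Z'` still covers `U`
by balls of radius `t'` while the points of `Z'` are pairwise at distance at least `f t'`.
Here `T = t_{n-1}` with `t_0 = t` and `t_{i+1} = t_i + f(t_i)`. -/
theorem stmt5 {M : Type*} [MetricSpace M] (t n : ℕ) (ht : 0 < t) (hn : 0 < n)
    (f : ℕ → ℕ) (hf : Monotone f) (hfpos : ∀ m, 0 < f m)
    (tseq : ℕ → ℕ) (h0 : tseq 0 = t) (hs : ∀ i, tseq (i + 1) = tseq i + f (tseq i))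
    (Z U : Set M) (hZfin : Z.Finite) (hZcard : Z.ncard ≤ n)
    (hcov : ∀ u ∈ U, ∃ z ∈ Z, dist u z < (t : ℝ)) :
    ∃ (Z' : Set M) (t' : ℕ), Z' ⊆ Z ∧ t' ≤ tseq (n - 1) ∧
      (∀ u ∈ U, ∃ z ∈ Z', dist u z < (t' : ℝ)) ∧
      ∀ z₁ ∈ Z', ∀ z₂ ∈ Z', z₁ ≠ z₂ → (f t' : ℝ) ≤ dist z₁ z₂ := by
  have tmono : Monotone tseq := by
    apply monotone_nat_of_le_succ
    intro i
    rw [hs i]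
    exact Nat.le_add_right _ _
  have key : ∀ k : ℕ, ∀ i : ℕ, ∀ Z : Set M, Z.Finite → Z.ncard ≤ k + 1 →
      (∀ u ∈ U, ∃ z ∈ Z, dist u z < (tseq i : ℝ)) →
      ∃ Z' : Set M, Z' ⊆ Z ∧ ∃ j : ℕ, j ≤ i + k ∧
        (∀ u ∈ U, ∃ z ∈ Z', dist u z < (tseq j : ℝ)) ∧
        ∀ z₁ ∈ Z', ∀ z₂ ∈ Z', z₁ ≠ z₂ → (f (tseq j) : ℝ) ≤ dist z₁ z₂ := by
    intro k
    induction k with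
    | zero =>
      intro i Z hfin hcard hc
      refine ⟨Z, subset_rfl, i, by omega, hc, ?_⟩
      intro z₁ h₁ z₂ h₂ hne
      exfalso
      have : 1 < Z.ncard := Set.one_lt_ncard_iff hfin |>.2 ⟨z₁, z₂, h₁, h₂, hne⟩
      omega
    | succ k ih =>
      intro i Z hfin hcard hc
      by_cases hsep : ∀ z₁ ∈ Z, ∀ z₂ ∈ Z, z₁ ≠ z₂ → (f (tseq i) : ℝ) ≤ dist z₁ z₂
      · exact ⟨Z, subset_rfl, i, by omega, hc, hsep⟩
      · push_neg at hsep
        obtain ⟨z₁, h₁, z₂, h₂, hne, hd⟩ := hsep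
        have cov' : ∀ u ∈ U, ∃ z ∈ Z \ {z₂}, dist u z < (tseq (i + 1) : ℝ) := by
          intro u hu
          obtain ⟨z, hz, hdz⟩ := hc u hu
          rcases eq_or_ne z z₂ with rfl | hzne
          · refine ⟨z₁, ⟨h₁, by simp [hne]⟩, ?_⟩
            have htri : dist u z₁ ≤ dist u z + dist z z₁ := dist_triangle u z z₁
            have hdz₂ : dist z z₁ < (f (tseq i) : ℝ) := by
              rwa [dist_comm]
            rw [hs i]
            push_cast
            linarith
          · refine ⟨z, ⟨hz, hzne⟩, ?_⟩
            have : (tseq i : ℝ) ≤ (tseq (i + 1) : ℝ) := by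
              exact_mod_cast tmono (Nat.le_succ i)
            linarith
        have hcard' : (Z \ {z₂}).ncard ≤ k + 1 := by
          have := Set.ncard_diff_singleton_of_mem h₂
          omega
        obtain ⟨Z', hsub, j, hj, hcj, hsj⟩ := ih (i + 1) (Z \ {z₂}) hfin.diff hcard' cov'
        exact ⟨Z', hsub.trans Set.diff_subset, j, by omega, hcj, hsj⟩
  have hcov0 : ∀ u ∈ U, ∃ z ∈ Z, dist u z < (tseq 0 : ℝ) := by
    intro u hu; rw [h0]; exact hcov u hu
  obtain ⟨Z', hsub, j, hj, hcj, hsj⟩ := key (n - 1) 0 Z hZfin (by omega) hcov0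
  exact ⟨Z', tseq j, hsub, tmono (by omega), hcj, hsj⟩
end

section
/- Let (M, d) be a metric space, t, n positive integers, f a non-decreasing positive function, and T as in the greedy sparsification bound (T = t_{n−1} where t₀ = t and tᵢ = tᵢ₋₁ + f(tᵢ₋₁)). Let Z, U ⊆ M with |Z| ≤ n such that every u ∈ U is within distance < t of Z, and let Z'' ⊆ Z be a subset whose elements are pairwise at distance ≥ T. Then one can choose the sparsified set Z' ⊆ Z with Z'' ⊆ Z', such that for some t' ≤ T, every u ∈ U is within distance < t' of Z' and distinct elements of Z' are at distance ≥ f(t'). -/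
/-- Greedy sparsification with prescribed survivors: in the setting of the greedy
sparsification bound (`T = t_{n-1}`, `t_0 = t`, `t_{i+1} = t_i + f(t_i)`), if `Z'' ⊆ Z`
has pairwise distances at least `T`, then the sparsified set `Z' ⊆ Z` can be chosen to
contain `Z''`. -/
theorem stmt6 {M : Type*} [MetricSpace M] (t n : ℕ) (ht : 0 < t) (hn : 0 < n)
    (f : ℕ → ℕ) (hf : Monotone f) (hfpos : ∀ m, 0 < f m)
    (tseq : ℕ → ℕ) (h0 : tseq 0 = t) (hs : ∀ i, tseq (i + 1) = tseq i + f (tseq i))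
    (Z U : Set M) (hZfin : Z.Finite) (hZcard : Z.ncard ≤ n)
    (hcov : ∀ u ∈ U, ∃ z ∈ Z, dist u z < (t : ℝ))
    (Z'' : Set M) (hZ''sub : Z'' ⊆ Z)
    (hfar : ∀ z₁ ∈ Z'', ∀ z₂ ∈ Z'', z₁ ≠ z₂ → (tseq (n - 1) : ℝ) ≤ dist z₁ z₂) :
    ∃ (Z' : Set M) (t' : ℕ), Z'' ⊆ Z' ∧ Z' ⊆ Z ∧ t' ≤ tseq (n - 1) ∧
      (∀ u ∈ U, ∃ z ∈ Z', dist u z < (t' : ℝ)) ∧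
      ∀ z₁ ∈ Z', ∀ z₂ ∈ Z', z₁ ≠ z₂ → (f t' : ℝ) ≤ dist z₁ z₂ := by
  have htseq_mono : Monotone tseq := monotone_nat_of_le_succ (fun i => by rw [hs]; omega)
  suffices h : ∀ k i (W : Set M), W.Finite → Z'' ⊆ W → W ⊆ Z → W.ncard ≤ k →
      i ≤ n - 1 → W.ncard + i ≤ n → (∀ u ∈ U, ∃ z ∈ W, dist u z < (tseq i : ℝ)) →
      ∃ Z' j, Z'' ⊆ Z' ∧ Z' ⊆ W ∧ j ≤ n - 1 ∧
        (∀ u ∈ U, ∃ z ∈ Z', dist u z < (tseq j : ℝ)) ∧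
        ∀ z₁ ∈ Z', ∀ z₂ ∈ Z', z₁ ≠ z₂ → (f (tseq j) : ℝ) ≤ dist z₁ z₂ by
    obtain ⟨Z', j, h1, h2, h3, h4, h5⟩ := h n 0 Z hZfin hZ''sub subset_rfl hZcard
      (by omega) (by omega) (by simpa [h0] using hcov)
    exact ⟨Z', tseq j, h1, h2, htseq_mono h3, h4, h5⟩
  intro k
  induction k with
  | zero =>
    intro i W hWfin hZ''W hWZ hcard hi hsum hcover
    have hWe : W = ∅ := by
      rw [← Set.ncard_eq_zero hWfin]; omega
    exact ⟨W, i, hZ''W, subset_rfl, hi, hcover, by simp [hWe]⟩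
  | succ k ih =>
    intro i W hWfin hZ''W hWZ hcard hi hsum hcover
    by_cases hpair : ∃ z₁ ∈ W, ∃ z₂ ∈ W, z₁ ≠ z₂ ∧ dist z₁ z₂ < (f (tseq i) : ℝ)
    · obtain ⟨z₁, hz₁, z₂, hz₂, hne, hd⟩ := hpair
      have h2 : 1 < W.ncard := by
        rw [Set.one_lt_ncard_iff hWfin]
        exact ⟨z₁, z₂, hz₁, hz₂, hne⟩
      have hi2 : i + 1 ≤ n - 1 := by omega
      have hfle : (f (tseq i) : ℝ) ≤ (tseq (n - 1) : ℝ) := by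
        have h1 : f (tseq i) ≤ tseq (i + 1) := by rw [hs]; omega
        have h2' : tseq (i + 1) ≤ tseq (n - 1) := htseq_mono hi2
        exact_mod_cast h1.trans h2'
      have hnot : z₁ ∉ Z'' ∨ z₂ ∉ Z'' := by
        by_contra hcon
        push_neg at hcon
        have := hfar z₁ hcon.1 z₂ hcon.2 hne
        linarith
      obtain ⟨a, b, ha, hb, hab, hdab, hbnot⟩ :
          ∃ a b, a ∈ W ∧ b ∈ W ∧ a ≠ b ∧ dist b a < (f (tseq i) : ℝ) ∧ b ∉ Z'' := by
        rcases hnot with hc | hc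
        · exact ⟨z₂, z₁, hz₂, hz₁, hne.symm, by rwa [dist_comm] at hd ⊢, hc⟩
        · exact ⟨z₁, z₂, hz₁, hz₂, hne, by rwa [dist_comm], hc⟩
      set W' := W \ {b} with hW'def
      have hW'fin : W'.Finite := hWfin.diff
      have hW'card : W'.ncard = W.ncard - 1 := Set.ncard_diff_singleton_of_mem hb
      have haW' : a ∈ W' := ⟨ha, by simpa using hab⟩
      have hcov' : ∀ u ∈ U, ∃ z ∈ W', dist u z < (tseq (i + 1) : ℝ) := by
        intro u hu
        obtain ⟨z, hzW, hz⟩ := hcover u hu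
        have hmono : (tseq i : ℝ) ≤ (tseq (i + 1) : ℝ) := by
          exact_mod_cast htseq_mono (Nat.le_succ i)
        by_cases hzb : z = b
        · refine ⟨a, haW', ?_⟩
          have : (tseq (i + 1) : ℝ) = (tseq i : ℝ) + (f (tseq i) : ℝ) := by
            push_cast [hs i]; ring
          calc dist u a ≤ dist u b + dist b a := dist_triangle u b a
            _ < (tseq i : ℝ) + (f (tseq i) : ℝ) := by
                exact add_lt_add (hzb ▸ hz) hdab
            _ = (tseq (i + 1) : ℝ) := this.symm
        · exact ⟨z, ⟨hzW, by simpa using hzb⟩, lt_of_lt_of_le hz hmono⟩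
      obtain ⟨Z', j, h1, h2, h3, h4, h5⟩ := ih (i + 1) W' hW'fin
        (fun x hx => ⟨hZ''W hx, fun hxb => hbnot (by simpa [Set.mem_singleton_iff.mp hxb] using hx)⟩)
        ((Set.diff_subset).trans hWZ) (by omega) hi2 (by omega) hcov'
      exact ⟨Z', j, h1, h2.trans Set.diff_subset, h3, h4, h5⟩
    · push_neg at hpair
      refine ⟨W, i, hZ''W, subset_rfl, hi, hcover, ?_⟩
      intro x hx y hy hxy
      exact hpair x hx y hy hxy
end

section
/- Let G₀ be a graph with tree-width tw(G₀), and let G = G₀ ∪ G₁ ∪ … ∪ G_m where G₁, …, G_m are vortices of depth at most d with pairwise disjoint vertex sets, V(G₀) ∩ V(Gᵢ) equals the set of boundary vertices of Gᵢ, and for each i the boundary vertices of Gᵢ, in their vortex order, form a path in G₀. Then tw(G) ≤ d·(tw(G₀) + 1) − 1. -/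
universe u

/-- `G` has a tree decomposition of width at most `w`. -/
def HasTreeDecomp {V : Type u} (G : SimpleGraph V) (w : ℕ) : Prop :=
  ∃ (ι : Type u) (tG : SimpleGraph ι) (β : ι → Finset V),
    tG.IsTree ∧
    (∀ v : V, ∃ i, v ∈ β i) ∧
    (∀ u v : V, G.Adj u v → ∃ i, u ∈ β i ∧ v ∈ β i) ∧
    (∀ v : V, (tG.induce {i | v ∈ β i}).Connected) ∧
    (∀ i, (β i).card ≤ w + 1)

/-- The tree-width of `G`, as an extended natural number. -/
noncomputable def treewidth {V : Type u} (G : SimpleGraph V) : ℕ∞ :=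
  sInf {n : ℕ∞ | ∃ w : ℕ, HasTreeDecomp G w ∧ n = (w : ℕ∞)}

lemma reach_induce_mono {ι : Type u} (tG : SimpleGraph ι) {S T : Set ι} (h : S ⊆ T)
    {x y : ι} (hx : x ∈ S) (hy : y ∈ S)
    (hr : (tG.induce S).Reachable ⟨x, hx⟩ ⟨y, hy⟩) :
    (tG.induce T).Reachable ⟨x, h hx⟩ ⟨y, h hy⟩ :=
  hr.map ⟨Set.inclusion h, fun {_ _} hab => hab⟩

lemma connected_induce_union {ι : Type u} (tG : SimpleGraph ι) {S T : Set ι}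
    (hS : (tG.induce S).Connected) (hT : (tG.induce T).Connected)
    (hST : (S ∩ T).Nonempty) :
    (tG.induce (S ∪ T)).Connected := by
  obtain ⟨z, hzS, hzT⟩ := hST
  have key : ∀ (x : ι) (hx : x ∈ S ∪ T),
      (tG.induce (S ∪ T)).Reachable ⟨x, hx⟩ ⟨z, Or.inl hzS⟩ := by
    intro x hx
    rcases hx with hx | hx
    · exact reach_induce_mono tG Set.subset_union_left hx hzS (hS.preconnected _ _)
    · exact reach_induce_mono tG (Set.subset_union_right (s := S)) hx hzT
        (hT.preconnected ⟨x, hx⟩ ⟨z, hzT⟩)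
  have : Nonempty ↑(S ∪ T) := ⟨⟨z, Or.inl hzS⟩⟩
  refine ⟨fun a b => ?_⟩
  exact (key a.1 a.2).trans (key b.1 b.2).symm

lemma connected_induce_chain {ι : Type u} (tG : SimpleGraph ι) (f : ℕ → Set ι) :
    ∀ n : ℕ, (∀ k, (tG.induce (f k)).Connected) →
      (∀ k < n, (f k ∩ f (k + 1)).Nonempty) →
      (tG.induce (⋃ k ∈ Set.Iic n, f k)).Connected := by
  intro n
  induction n with
  | zero =>
    intro h _
    have : (⋃ k ∈ Set.Iic 0, f k) = f 0 := by simp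
    rw [this]; exact h 0
  | succ n ih =>
    intro h hint
    have hrw : (⋃ k ∈ Set.Iic (n+1), f k) = f (n+1) ∪ ⋃ k ∈ Set.Iic n, f k := by
      ext x
      simp only [Set.mem_iUnion, Set.mem_Iic, Set.mem_union]
      constructor
      · rintro ⟨k, hk, hx⟩
        rcases eq_or_lt_of_le hk with rfl | hk'
        · exact Or.inl hx
        · exact Or.inr ⟨k, by omega, hx⟩
      · rintro (hx | ⟨k, hk, hx⟩)
        · exact ⟨n+1, le_rfl, hx⟩
        · exact ⟨k, by omega, hx⟩
    rw [hrw, Set.union_comm]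
    refine connected_induce_union tG (ih h (fun k hk => hint k (by omega))) (h (n+1)) ?_
    obtain ⟨z, hz1, hz2⟩ := hint n (by omega)
    exact ⟨z, Set.mem_biUnion (Set.mem_Iic.2 le_rfl) hz1, hz2⟩

lemma key_lemma {V : Type u} (G G₀ : SimpleGraph V) (m d : ℕ) (hd : 1 ≤ d)
    (Gv : Fin m → SimpleGraph V)
    (t : Fin m → ℕ)
    (bd : (i : Fin m) → Fin (t i) → V)
    (bag : (i : Fin m) → Fin (t i) → Finset V)
    (hbdinj : ∀ i, Function.Injective (bd i))
    (hbdbag : ∀ i j, bd i j ∈ bag i j)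
    (hdepth : ∀ i j, (bag i j).card ≤ d)
    (hedge : ∀ i u v, (Gv i).Adj u v → ∃ j, u ∈ bag i j ∧ v ∈ bag i j)
    (hinterval : ∀ i (j₁ j₂ j₃ : Fin (t i)), j₁ ≤ j₂ → j₂ ≤ j₃ →
      ∀ x, x ∈ bag i j₁ → x ∈ bag i j₃ → x ∈ bag i j₂)
    (hdisj : ∀ i i', i ≠ i' → ∀ j j', Disjoint ((bag i j : Set V)) ((bag i' j' : Set V)))
    (hbound : ∀ i x, (∃ j, x ∈ bag i j) → x ∉ Set.range (bd i) → ∀ y, ¬ G₀.Adj x y)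
    (hpath : ∀ i (j : Fin (t i)) (h : (j : ℕ) + 1 < t i),
      G₀.Adj (bd i j) (bd i ⟨(j : ℕ) + 1, h⟩))
    (hunion : G = G₀ ⊔ (⨆ i, Gv i))
    (w : ℕ) (hw : HasTreeDecomp G₀ w) :
    HasTreeDecomp G (d * (w + 1) - 1) := by
  classical
  obtain ⟨ι, tG, β, htree, hcover, hedgecov, hconn, hcard⟩ := hw
  -- auxiliary facts
  have bag_unique : ∀ {i j i' j'}, bd i j = bd i' j' → bag i j = bag i' j' := by
    intro i j i' j' h
    by_cases hi : i = i'
    · subst hi; rw [hbdinj i h]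
    · exfalso
      have h1 : bd i j ∈ (bag i j : Set V) := hbdbag i j
      have h2 : bd i j ∈ (bag i' j' : Set V) := by rw [h]; exact hbdbag i' j'
      exact Set.disjoint_left.1 (hdisj i i' hi j j') h1 h2
  set f : V → Finset V := fun v =>
    if h : ∃ p : (Σ i : Fin m, Fin (t i)), bd p.1 p.2 = v then bag h.choose.1 h.choose.2
    else if ∃ i j, v ∈ bag i j then ∅ else ({v} : Finset V) with hf
  have F1 : ∀ i j, f (bd i j) = bag i j := by
    intro i j
    have hex : ∃ p : (Σ i : Fin m, Fin (t i)), bd p.1 p.2 = bd i j := ⟨⟨i, j⟩, rfl⟩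
    rw [hf]
    simp only [dif_pos hex]
    exact bag_unique hex.choose_spec
  have F2 : ∀ v, (¬ ∃ i j, v ∈ bag i j) → f v = {v} := by
    intro v hv
    have hne : ¬ ∃ p : (Σ i : Fin m, Fin (t i)), bd p.1 p.2 = v := by
      rintro ⟨⟨i, j⟩, rfl⟩
      exact hv ⟨i, j, hbdbag i j⟩
    rw [hf]
    simp only [dif_neg hne, if_neg hv]
  have F3 : ∀ u v, v ∈ f u →
      (∃ i j, u = bd i j ∧ v ∈ bag i j) ∨ (u = v ∧ ¬ ∃ i j, u ∈ bag i j) := by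
    intro u v hv
    rw [hf] at hv
    by_cases hex : ∃ p : (Σ i : Fin m, Fin (t i)), bd p.1 p.2 = u
    · simp only [dif_pos hex] at hv
      exact Or.inl ⟨hex.choose.1, hex.choose.2, hex.choose_spec.symm, hv⟩
    · simp only [dif_neg hex] at hv
      by_cases hb : ∃ i j, u ∈ bag i j
      · rw [if_pos hb] at hv; simp at hv
      · rw [if_neg hb] at hv
        simp only [Finset.mem_singleton] at hv
        exact Or.inr ⟨hv.symm, hb⟩
  have Fcard : ∀ v, (f v).card ≤ d := by
    intro v
    rw [hf]
    by_cases hex : ∃ p : (Σ i : Fin m, Fin (t i)), bd p.1 p.2 = v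
    · simp only [dif_pos hex]; exact hdepth _ _
    · simp only [dif_neg hex]
      split
      · simp
      · simp [hd]
  -- boundary or free vertices are in their own f-image
  have Fself : ∀ u, (∃ p : (Σ i : Fin m, Fin (t i)), bd p.1 p.2 = u) ∨
      (¬ ∃ i j, u ∈ bag i j) → u ∈ f u := by
    rintro u (⟨⟨i, j⟩, rfl⟩ | hfree)
    · rw [F1]; exact hbdbag i j
    · rw [F2 u hfree]; exact Finset.mem_singleton_self u
  refine ⟨ι, tG, fun x => (β x).biUnion f, htree, ?_, ?_, ?_, ?_⟩
  · -- cover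
    intro v
    by_cases hv : ∃ i j, v ∈ bag i j
    · obtain ⟨i, j, hij⟩ := hv
      obtain ⟨x, hx⟩ := hcover (bd i j)
      exact ⟨x, Finset.mem_biUnion.2 ⟨bd i j, hx, by rw [F1]; exact hij⟩⟩
    · obtain ⟨x, hx⟩ := hcover v
      exact ⟨x, Finset.mem_biUnion.2 ⟨v, hx, Fself v (Or.inr hv)⟩⟩
  · -- edges
    intro u v huv
    rw [hunion] at huv
    rcases huv with huv | huv
    · -- G₀ edge
      have hself : ∀ z y, G₀.Adj z y → z ∈ f z := by
        intro z y hzy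
        apply Fself
        by_cases hex : ∃ p : (Σ i : Fin m, Fin (t i)), bd p.1 p.2 = z
        · exact Or.inl hex
        · right
          rintro ⟨i, j, hij⟩
          refine hbound i z ⟨j, hij⟩ ?_ y hzy
          rintro ⟨j', hj'⟩
          exact hex ⟨⟨i, j'⟩, hj'⟩
      obtain ⟨x, hu, hv⟩ := hedgecov u v huv
      exact ⟨x, Finset.mem_biUnion.2 ⟨u, hu, hself u v huv⟩,
        Finset.mem_biUnion.2 ⟨v, hv, hself v u huv.symm⟩⟩
    · -- vortex edge
      rw [SimpleGraph.iSup_adj] at huv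
      obtain ⟨i, huv⟩ := huv
      obtain ⟨j, hju, hjv⟩ := hedge i u v huv
      obtain ⟨x, hx⟩ := hcover (bd i j)
      exact ⟨x, Finset.mem_biUnion.2 ⟨bd i j, hx, by rw [F1]; exact hju⟩,
        Finset.mem_biUnion.2 ⟨bd i j, hx, by rw [F1]; exact hjv⟩⟩
  · -- connectivity
    intro v
    by_cases hv : ∃ i j, v ∈ bag i j
    · obtain ⟨i, j₀, hj₀⟩ := hv
      -- characterize membership
      have hmem : ∀ u, v ∈ f u ↔ ∃ j : Fin (t i), u = bd i j ∧ v ∈ bag i j := by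
        intro u
        constructor
        · intro h
          rcases F3 u v h with ⟨i', j', rfl, hj'⟩ | ⟨rfl, hfree⟩
          · have hi : i' = i := by
              by_contra hii
              exact Set.disjoint_left.1 (hdisj i' i hii j' j₀) hj' hj₀
            subst hi
            exact ⟨j', rfl, hj'⟩
          · exact absurd ⟨i, j₀, hj₀⟩ hfree
        · rintro ⟨j, rfl, hj⟩
          rw [F1]; exact hj
      set J : Finset (Fin (t i)) := Finset.univ.filter (fun j => v ∈ bag i j) with hJ
      have hJne : J.Nonempty := ⟨j₀, by simp [hJ, hj₀]⟩
      set a := J.min' hJne with ha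
      set b := J.max' hJne with hb
      have hab : (a : ℕ) ≤ b := Fin.le_iff_val_le_val.mp (J.min'_le b (J.max'_mem hJne))
      have hva : v ∈ bag i a := by have := J.min'_mem hJne; simpa [hJ] using this
      have hvb : v ∈ bag i b := by have := J.max'_mem hJne; simpa [hJ] using this
      have hJint : ∀ j : Fin (t i), v ∈ bag i j ↔ (a : ℕ) ≤ j ∧ (j : ℕ) ≤ b := by
        intro j
        constructor
        · intro hj
          have hjJ : j ∈ J := by simp [hJ, hj]
          exact ⟨J.min'_le j hjJ, J.le_max' j hjJ⟩
        · rintro ⟨h1, h2⟩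
          exact hinterval i a j b (by exact_mod_cast h1) (by exact_mod_cast h2) v hva hvb
      set F : ℕ → Set ι := fun k =>
        {x | bd i ⟨min ((a : ℕ) + k) b, lt_of_le_of_lt (min_le_right _ _) b.isLt⟩ ∈ β x}
        with hF
      have hFeq : ∀ (k : ℕ) (h2 : (a : ℕ) + k < t i), k ≤ (b : ℕ) - a →
          F k = {x | bd i ⟨(a : ℕ) + k, h2⟩ ∈ β x} := by
        intro k h2 hk
        have hmin : min ((a : ℕ) + k) (b : ℕ) = (a : ℕ) + k := by omega
        simp only [hF, hmin]
      have hSset : {x | v ∈ (β x).biUnion f} = ⋃ k ∈ Set.Iic ((b : ℕ) - a), F k := by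
        ext x
        simp only [Set.mem_setOf_eq, Finset.mem_biUnion, Set.mem_iUnion, Set.mem_Iic]
        constructor
        · rintro ⟨u, hu, hvu⟩
          obtain ⟨j, rfl, hj⟩ := (hmem u).1 hvu
          have hj2 := (hJint j).1 hj
          have hjlt := j.isLt
          refine ⟨(j : ℕ) - a, by omega, ?_⟩
          rw [hFeq _ (by omega) (by omega)]
          have : (⟨(a : ℕ) + ((j : ℕ) - (a : ℕ)), by omega⟩ : Fin (t i)) = j :=
            Fin.ext (by simp only []; omega)
          rw [this]
          exact hu
        · rintro ⟨k, hk, hx⟩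
          have hblt := b.isLt
          rw [hFeq _ (by omega) hk] at hx
          refine ⟨bd i ⟨(a : ℕ) + k, by omega⟩, hx,
            (hmem _).2 ⟨⟨(a : ℕ) + k, by omega⟩, rfl, ?_⟩⟩
          exact (hJint _).2 ⟨by simp, by simp; omega⟩
      rw [hSset]
      apply connected_induce_chain
      · intro k; exact hconn _
      · intro k hk
        have hblt := b.isLt
        have h1 : (a : ℕ) + k + 1 < t i := by omega
        have hadj := hpath i ⟨(a : ℕ) + k, by omega⟩ (by simpa using h1)
        obtain ⟨x, hx1, hx2⟩ := hedgecov _ _ hadj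
        refine ⟨x, ?_, ?_⟩
        · rw [hFeq k (by omega) (by omega)]
          exact hx1
        · rw [hFeq (k+1) (by omega) (by omega)]
          have : (⟨(a : ℕ) + (k + 1), by omega⟩ : Fin (t i)) =
              ⟨(a : ℕ) + k + 1, h1⟩ := Fin.ext (by simp only []; omega)
          rw [this]
          exact hx2
    · -- v in no bag
      have hset : {x | v ∈ (β x).biUnion f} = {x | v ∈ β x} := by
        ext x
        simp only [Set.mem_setOf_eq, Finset.mem_biUnion]
        constructor
        · rintro ⟨u, hu, hvu⟩
          rcases F3 u v hvu with ⟨i, j, rfl, hj⟩ | ⟨rfl, _⟩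
          · exact absurd ⟨i, j, hj⟩ hv
          · exact hu
        · intro hx
          exact ⟨v, hx, Fself v (Or.inr hv)⟩
      rw [hset]
      exact hconn v
  · -- card
    intro x
    have h1 : ((β x).biUnion f).card ≤ (β x).card * d :=
      Finset.card_biUnion_le_card_mul _ _ _ (fun u _ => Fcard u)
    have h2 : (β x).card * d ≤ (w + 1) * d := Nat.mul_le_mul_right d (hcard x)
    have h3 : d * (w + 1) - 1 + 1 = d * (w + 1) := by
      have : 1 ≤ d * (w + 1) := Nat.one_le_iff_ne_zero.2 (by positivity)
      omega
    show ((β x).biUnion f).card ≤ d * (w + 1) - 1 + 1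
    calc ((β x).biUnion f).card ≤ (β x).card * d := h1
      _ ≤ (w + 1) * d := h2
      _ = d * (w + 1) - 1 + 1 := by rw [h3, Nat.mul_comm]

/-- If `G = G₀ ∪ G₁ ∪ ⋯ ∪ G_m` where the `Gᵢ` (`i ≥ 1`) are vortices of depth at most `d`
with pairwise disjoint vertex sets, attached to `G₀` only along their boundary vertices
which form paths in `G₀` in vortex order, then `tw(G) ≤ d·(tw(G₀) + 1) − 1`. -/
theorem stmt7 {V : Type u} (G G₀ : SimpleGraph V) (m d : ℕ) (hd : 1 ≤ d)
    (Gv : Fin m → SimpleGraph V)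
    (t : Fin m → ℕ)
    (bd : (i : Fin m) → Fin (t i) → V)
    (bag : (i : Fin m) → Fin (t i) → Finset V)
    -- the boundary vertices of each vortex are distinct, and `bd i j ∈ bag i j`
    (hbdinj : ∀ i, Function.Injective (bd i))
    (hbdbag : ∀ i j, bd i j ∈ bag i j)
    -- the vortices have depth at most `d`
    (hdepth : ∀ i j, (bag i j).card ≤ d)
    -- the bags form a path decomposition of the vortex `Gv i`
    (hedge : ∀ i u v, (Gv i).Adj u v → ∃ j, u ∈ bag i j ∧ v ∈ bag i j)
    (hinterval : ∀ i (j₁ j₂ j₃ : Fin (t i)), j₁ ≤ j₂ → j₂ ≤ j₃ →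
      ∀ x, x ∈ bag i j₁ → x ∈ bag i j₃ → x ∈ bag i j₂)
    -- the vertex sets of distinct vortices are disjoint
    (hdisj : ∀ i i', i ≠ i' → ∀ j j', Disjoint ((bag i j : Set V)) ((bag i' j' : Set V)))
    -- `G₀` meets each vortex only in its boundary vertices
    (hbound : ∀ i x, (∃ j, x ∈ bag i j) → x ∉ Set.range (bd i) → ∀ y, ¬ G₀.Adj x y)
    -- the boundary vertices of each vortex, in order, form a path in `G₀`
    (hpath : ∀ i (j : Fin (t i)) (h : (j : ℕ) + 1 < t i),
      G₀.Adj (bd i j) (bd i ⟨(j : ℕ) + 1, h⟩))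
    (hunion : G = G₀ ⊔ (⨆ i, Gv i)) :
    treewidth G ≤ (d : ℕ∞) * (treewidth G₀ + 1) - 1 := by
  classical
  by_cases h : ∃ w : ℕ, HasTreeDecomp G₀ w
  · set w₀ := Nat.find h with hw₀
    have h1 : HasTreeDecomp G₀ w₀ := Nat.find_spec h
    have h2 : (w₀ : ℕ∞) ≤ treewidth G₀ := by
      apply le_sInf
      rintro n ⟨w', hw', rfl⟩
      exact_mod_cast Nat.find_min' h hw'
    have h3 : treewidth G ≤ ((d * (w₀ + 1) - 1 : ℕ) : ℕ∞) := by
      apply sInf_le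
      exact ⟨d * (w₀ + 1) - 1, key_lemma G G₀ m d hd Gv t bd bag hbdinj hbdbag hdepth hedge
        hinterval hdisj hbound hpath hunion w₀ h1, rfl⟩
    refine h3.trans ?_
    have hpos : 1 ≤ d * (w₀ + 1) := Nat.one_le_iff_ne_zero.2 (by positivity)
    have hcast : ((d * (w₀ + 1) - 1 : ℕ) : ℕ∞) = (d : ℕ∞) * ((w₀ : ℕ∞) + 1) - 1 := by
      rw [ENat.coe_sub, Nat.cast_mul, Nat.cast_add, Nat.cast_one]
    rw [hcast]
    apply tsub_le_tsub_right
    apply mul_le_mul_right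
    exact add_le_add_left h2 1
  · have hempty : {n : ℕ∞ | ∃ w : ℕ, HasTreeDecomp G₀ w ∧ n = (w : ℕ∞)} = ∅ := by
      ext n
      simp only [Set.mem_setOf_eq, Set.mem_empty_iff_false, iff_false]
      rintro ⟨w, hw, _⟩
      exact h ⟨w, hw⟩
    have htop : treewidth G₀ = ⊤ := by rw [treewidth, hempty, sInf_empty]
    rw [htop]
    have : (d : ℕ∞) * (⊤ + 1) - 1 = ⊤ := by
      rw [top_add, ENat.mul_top (by exact_mod_cast Nat.one_le_iff_ne_zero.1 hd)]
      rfl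
    rw [this]
    exact le_top
end

section
/- Let G be a graph and Y ⊆ V(G) with |Y| = 3θ − 2 for an integer θ ≥ 1, such that there is no separation (C, D) of G of order less than θ with |V(C) ∩ (V(D) ∪ Y)| < 3θ − 2 and |V(D) ∩ (V(C) ∪ Y)| < 3θ − 2. Then the set T of all separations (C, D) of G of order less than θ with |V(C) ∩ Y| ≤ θ − 1 is a tangle of order θ in G: (i) for every separation (C,D) of order < θ, exactly one of (C,D), (D,C) is in T; (ii) if (C₁,D₁), (C₂,D₂), (C₃,D₃) ∈ T then C₁ ∪ C₂ ∪ C₃ ≠ G; (iii) no (C,D) ∈ T has V(C) = V(G). -/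
/-- If `|Y| = 3θ − 2` and `G` has no separation of order `< θ` with both sides containing
fewer than `3θ − 2` vertices of the other side together with `Y`, then the separations
`(C, D)` of order `< θ` with `|V(C) ∩ Y| ≤ θ − 1` form a tangle of order `θ`. -/
theorem stmt15 {V : Type*} [Fintype V] (G : SimpleGraph V) (θ : ℕ) (hθ : 1 ≤ θ)
    (Y : Set V) (hY : Y.ncard = 3 * θ - 2)
    (hno : ¬ ∃ C D : G.Subgraph, C ⊔ D = ⊤ ∧ (C.verts ∩ D.verts).ncard < θ ∧
      (C.verts ∩ (D.verts ∪ Y)).ncard < 3 * θ - 2 ∧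
      (D.verts ∩ (C.verts ∪ Y)).ncard < 3 * θ - 2) :
    -- `T` consists of the separations of order `< θ` whose small side meets `Y`
    -- in at most `θ − 1` vertices
    letI T : Set (G.Subgraph × G.Subgraph) :=
      {p | p.1 ⊔ p.2 = ⊤ ∧ (p.1.verts ∩ p.2.verts).ncard < θ ∧
        (p.1.verts ∩ Y).ncard ≤ θ - 1}
    -- (i) of every separation of order `< θ`, exactly one orientation lies in `T`
    (∀ C D : G.Subgraph, C ⊔ D = ⊤ → (C.verts ∩ D.verts).ncard < θ →
      Xor' ((C, D) ∈ T) ((D, C) ∈ T)) ∧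
    -- (ii) no three small sides cover `G`
    (∀ p₁ p₂ p₃, p₁ ∈ T → p₂ ∈ T → p₃ ∈ T → p₁.1 ⊔ p₂.1 ⊔ p₃.1 ≠ ⊤) ∧
    -- (iii) no small side contains all vertices
    (∀ p ∈ T, p.1.verts ≠ Set.univ) := by
  show _ ∧ _ ∧ _
  have hfin : ∀ s : Set V, s.Finite := fun s => s.toFinite
  -- key bound used to invoke `hno`
  have key : ∀ C D : G.Subgraph, (C.verts ∩ D.verts).ncard < θ →
      θ ≤ (D.verts ∩ Y).ncard → (C.verts ∩ (D.verts ∪ Y)).ncard < 3 * θ - 2 := by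
    intro C D hord hDY
    have hsub : C.verts ∩ (D.verts ∪ Y) ⊆ (C.verts ∩ D.verts) ∪ (Y \ D.verts) := by
      rintro x ⟨hxC, hx⟩
      by_cases hxD : x ∈ D.verts
      · exact Or.inl ⟨hxC, hxD⟩
      · rcases hx with hxD' | hxY
        · exact absurd hxD' hxD
        · exact Or.inr ⟨hxY, hxD⟩
    have h1 := Set.ncard_le_ncard hsub ((hfin _).union (hfin _))
    have h2 := Set.ncard_union_le (C.verts ∩ D.verts) (Y \ D.verts)
    have h3 : (Y ∩ D.verts).ncard + (Y \ D.verts).ncard = Y.ncard :=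
      Set.ncard_inter_add_ncard_diff_eq_ncard Y D.verts (hfin _)
    have h4 : (Y ∩ D.verts).ncard = (D.verts ∩ Y).ncard := by rw [Set.inter_comm]
    omega
  -- the two small sides of a separation together cover Y
  have cover : ∀ C D : G.Subgraph, C ⊔ D = ⊤ →
      Y.ncard ≤ (C.verts ∩ Y).ncard + (D.verts ∩ Y).ncard := by
    intro C D hCD
    have hverts : C.verts ∪ D.verts = Set.univ := by
      have := congrArg SimpleGraph.Subgraph.verts hCD
      simpa using this
    have hsub : Y ⊆ (C.verts ∩ Y) ∪ (D.verts ∩ Y) := by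
      intro x hx
      have hx' : x ∈ C.verts ∪ D.verts := hverts ▸ Set.mem_univ x
      rcases hx' with h | h
      · exact Or.inl ⟨h, hx⟩
      · exact Or.inr ⟨h, hx⟩
    calc Y.ncard ≤ ((C.verts ∩ Y) ∪ (D.verts ∩ Y)).ncard :=
          Set.ncard_le_ncard hsub ((hfin _).union (hfin _))
      _ ≤ _ := Set.ncard_union_le _ _
  refine ⟨?_, ?_, ?_⟩
  · -- (i)
    intro C D hCD hord
    have hDC : D ⊔ C = ⊤ := by rw [sup_comm]; exact hCD
    have hordDC : (D.verts ∩ C.verts).ncard < θ := by rw [Set.inter_comm]; exact hord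
    have hsum := cover C D hCD
    rw [hY] at hsum
    by_cases h : (C.verts ∩ Y).ncard ≤ θ - 1
    · refine Or.inl ⟨⟨hCD, hord, h⟩, fun hx => ?_⟩
      have h3 : (D.verts ∩ Y).ncard ≤ θ - 1 := hx.2.2
      omega
    · have hCYge : θ ≤ (C.verts ∩ Y).ncard := by omega
      refine Or.inr ⟨⟨hDC, hordDC, ?_⟩, fun hx => h hx.2.2⟩
      show (D.verts ∩ Y).ncard ≤ θ - 1
      by_contra h'
      have hDYge : θ ≤ (D.verts ∩ Y).ncard := by omega
      exact hno ⟨C, D, hCD, hord, key C D hord hDYge, key D C hordDC hCYge⟩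
  · -- (ii)
    intro p₁ p₂ p₃ h₁ h₂ h₃ htop
    have hverts : p₁.1.verts ∪ p₂.1.verts ∪ p₃.1.verts = Set.univ := by
      have := congrArg SimpleGraph.Subgraph.verts htop
      simpa using this
    have hsub : Y ⊆ (p₁.1.verts ∩ Y) ∪ (p₂.1.verts ∩ Y) ∪ (p₃.1.verts ∩ Y) := by
      intro x hx
      have hx' : x ∈ p₁.1.verts ∪ p₂.1.verts ∪ p₃.1.verts := hverts ▸ Set.mem_univ x
      rcases hx' with (h | h) | h
      · exact Or.inl (Or.inl ⟨h, hx⟩)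
      · exact Or.inl (Or.inr ⟨h, hx⟩)
      · exact Or.inr ⟨h, hx⟩
    have hle : Y.ncard ≤ (p₁.1.verts ∩ Y).ncard + (p₂.1.verts ∩ Y).ncard
        + (p₃.1.verts ∩ Y).ncard := by
      calc Y.ncard ≤ ((p₁.1.verts ∩ Y) ∪ (p₂.1.verts ∩ Y) ∪ (p₃.1.verts ∩ Y)).ncard :=
            Set.ncard_le_ncard hsub (((hfin _).union (hfin _)).union (hfin _))
        _ ≤ ((p₁.1.verts ∩ Y) ∪ (p₂.1.verts ∩ Y)).ncard + (p₃.1.verts ∩ Y).ncard :=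
            Set.ncard_union_le _ _
        _ ≤ _ := by
            have := Set.ncard_union_le (p₁.1.verts ∩ Y) (p₂.1.verts ∩ Y)
            omega
    have e₁ := h₁.2.2
    have e₂ := h₂.2.2
    have e₃ := h₃.2.2
    omega
  · -- (iii)
    intro p hp huniv
    have : p.1.verts ∩ Y = Y := by rw [huniv, Set.univ_inter]
    have := hp.2.2
    rw [‹p.1.verts ∩ Y = Y›] at this
    omega
end

section
/- Let k ≥ 3 and let G be a graph consisting of vertices c, x₀, x₁, …, x_m together with, for each 1 ≤ i ≤ m, an A-gadget on the triple (c, x_{i−1}, xᵢ), where an A-gadget on (a,b,c) is a graph whose set of proper k-colorings restricted to {a,b,c} is exactly the set of colorings where either all three vertices get the same color or all three get pairwise distinct colors. Then in every proper k-coloring ψ of G, either ψ(x_{i−1}) = ψ(xᵢ) for all 1 ≤ i ≤ m, or ψ(x_{i−1}) ≠ ψ(xᵢ) for all 1 ≤ i ≤ m. -/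
/-- In a chain of `A`-gadgets on the triples `(c, x_{i-1}, x_i)` (where `A` consists of
the `k`-colorings of a triple whose values are all equal or pairwise distinct), every
proper `k`-coloring either makes all consecutive pairs `x_{i-1}, x_i` equal, or makes all
of them distinct. -/
theorem stmt19 {V : Type*} (k : ℕ) (hk : 3 ≤ k) (m : ℕ)
    (G : SimpleGraph V) (Hg : Fin m → SimpleGraph V)
    (c : V) (x : Fin (m + 1) → V)
    (hxinj : Function.Injective x) (hcx : ∀ i, c ≠ x i)
    -- `G` is the union of the gadgets
    (hG : G = ⨆ i, Hg i)
    -- each `Hg i` is an `A`-gadget on `(c, x_{i-1}, x_i)` for `k`-coloring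
    (hgadget : ∀ i : Fin m,
      {p : Fin k × Fin k × Fin k | ∃ φ : V → Fin k,
          (∀ u v, (Hg i).Adj u v → φ u ≠ φ v) ∧
          p = (φ c, φ (x i.castSucc), φ (x i.succ))} =
      {p : Fin k × Fin k × Fin k |
        (p.1 = p.2.1 ∧ p.1 = p.2.2) ∨
        (p.1 ≠ p.2.1 ∧ p.1 ≠ p.2.2 ∧ p.2.1 ≠ p.2.2)}) :
    ∀ φ : V → Fin k, (∀ u v, G.Adj u v → φ u ≠ φ v) →
      (∀ i : Fin m, φ (x i.castSucc) = φ (x i.succ)) ∨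
      (∀ i : Fin m, φ (x i.castSucc) ≠ φ (x i.succ)) := by
  intro φ hφ
  have key : ∀ i : Fin m,
      (φ c = φ (x i.castSucc) ∧ φ c = φ (x i.succ)) ∨
      (φ c ≠ φ (x i.castSucc) ∧ φ c ≠ φ (x i.succ) ∧
        φ (x i.castSucc) ≠ φ (x i.succ)) := by
    intro i
    have hmem : (φ c, φ (x i.castSucc), φ (x i.succ)) ∈
        {p : Fin k × Fin k × Fin k | ∃ φ : V → Fin k,
          (∀ u v, (Hg i).Adj u v → φ u ≠ φ v) ∧
          p = (φ c, φ (x i.castSucc), φ (x i.succ))} := by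
      refine ⟨φ, fun u v h => hφ u v ?_, rfl⟩
      rw [hG]
      exact le_iSup Hg i h
    rw [hgadget i] at hmem
    exact hmem
  by_cases h0 : φ c = φ (x 0)
  · left
    have hall : ∀ i : Fin (m + 1), φ c = φ (x i) := by
      intro i
      induction i using Fin.induction with
      | zero => exact h0
      | succ j ih =>
        rcases key j with ⟨_, h⟩ | ⟨h, _⟩
        · exact h
        · exact absurd ih h
    intro i
    rw [← hall i.castSucc, ← hall i.succ]
  · right
    have hall : ∀ i : Fin (m + 1), φ c ≠ φ (x i) := by
      intro i
      induction i using Fin.induction with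
      | zero => exact h0
      | succ j ih =>
        rcases key j with ⟨h, _⟩ | ⟨_, h, _⟩
        · exact absurd h ih
        · exact h
    intro i
    rcases key i with ⟨h, _⟩ | ⟨_, _, h⟩
    · exact absurd h (hall i.castSucc)
    · exact h
end
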